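/- Uniqueness in Sklar's theorem: if all marginals F₁,…,F_d of a multivariate CDF H are continuous, then the copula C with H(x) = C(F₁(x₁),…,F_d(x_d)) is unique on [0,1]^d. -/

import Mathlib

open MeasureTheory Set Filter Topology

/-- A `d`-dimensional copula: on `[0,1]^d` it is the joint CDF of a random
vector with uniform `[0,1]` margins. -/
def IsCopula (d : ℕ) (C : (Fin d → ℝ) → ℝ) : Prop :=
  ∃ μ : Measure (Fin d → ℝ), IsProbabilityMeasure μ ∧
    (∀ i, μ.map (fun y => y i) = volume.restrict (Icc (0 : ℝ) 1)) ∧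
    ∀ u : Fin d → ℝ, (∀ i, u i ∈ Icc (0 : ℝ) 1) →
      C u = (μ {y | ∀ i, y i ≤ u i}).toReal

/-- One-sided Lipschitz estimate for the joint CDF of a measure with uniform
margins. -/
lemma copula_measure_le (d : ℕ) (ν : Measure (Fin d → ℝ)) [IsProbabilityMeasure ν]
    (hm : ∀ i, ν.map (fun y => y i) = volume.restrict (Icc (0 : ℝ) 1))
    (u v : Fin d → ℝ) :
    ν {y | ∀ i, y i ≤ u i} ≤ ν {y | ∀ i, y i ≤ u i ⊓ v i}
      + ENNReal.ofReal (∑ i, |u i - v i|) := by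
  set A : (Fin d → ℝ) → Set (Fin d → ℝ) := fun w => {y | ∀ i, y i ≤ w i} with hA
  set m : Fin d → ℝ := fun i => u i ⊓ v i with hm'
  have hsub : A u ⊆ A m ∪ ⋃ i, (fun y : Fin d → ℝ => y i) ⁻¹' Ioc (m i) (u i) := by
    intro y hy
    by_cases h : ∀ i, y i ≤ m i
    · exact Or.inl h
    · push_neg at h
      obtain ⟨i, hi⟩ := h
      exact Or.inr (mem_iUnion.2 ⟨i, hi, hy i⟩)
  calc ν (A u) ≤ ν (A m ∪ ⋃ i, (fun y : Fin d → ℝ => y i) ⁻¹' Ioc (m i) (u i)) :=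
        measure_mono hsub
    _ ≤ ν (A m) + ν (⋃ i, (fun y : Fin d → ℝ => y i) ⁻¹' Ioc (m i) (u i)) :=
        measure_union_le _ _
    _ ≤ ν (A m) + ∑ i, ν ((fun y : Fin d → ℝ => y i) ⁻¹' Ioc (m i) (u i)) := by
        gcongr
        exact measure_iUnion_fintype_le _ _
    _ ≤ ν (A m) + ENNReal.ofReal (∑ i, |u i - v i|) := by
        gcongr
        rw [ENNReal.ofReal_sum_of_nonneg (fun i _ => abs_nonneg _)]
        refine Finset.sum_le_sum fun i _ => ?_
        have hmap : ν ((fun y : Fin d → ℝ => y i) ⁻¹' Ioc (m i) (u i))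
            = (volume.restrict (Icc (0 : ℝ) 1)) (Ioc (m i) (u i)) := by
          rw [← hm i, Measure.map_apply (measurable_pi_apply i) measurableSet_Ioc]
        rw [hmap]
        calc (volume.restrict (Icc (0 : ℝ) 1)) (Ioc (m i) (u i))
            ≤ volume (Ioc (m i) (u i)) := Measure.restrict_le_self _
          _ = ENNReal.ofReal (u i - m i) := by rw [Real.volume_Ioc]
          _ ≤ ENNReal.ofReal |u i - v i| := by
              apply ENNReal.ofReal_le_ofReal
              rcases le_total (v i) (u i) with h | h
              · simp only [hm', inf_eq_right.2 h]
                exact le_abs_self _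
              · simp only [hm', inf_eq_left.2 h, sub_self]
                exact abs_nonneg _

/-- Lipschitz estimate for the joint CDF of a measure with uniform margins. -/
lemma copula_lipschitz (d : ℕ) (ν : Measure (Fin d → ℝ)) [IsProbabilityMeasure ν]
    (hm : ∀ i, ν.map (fun y => y i) = volume.restrict (Icc (0 : ℝ) 1))
    (u v : Fin d → ℝ) :
    |(ν {y | ∀ i, y i ≤ u i}).toReal - (ν {y | ∀ i, y i ≤ v i}).toReal|
      ≤ ∑ i, |u i - v i| := by
  set m : Fin d → ℝ := fun i => u i ⊓ v i with hm'
  have hs : (0 : ℝ) ≤ ∑ i, |u i - v i| := Finset.sum_nonneg fun i _ => abs_nonneg _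
  have key : ∀ w w' : Fin d → ℝ, (∀ i, w i ⊓ w' i = m i) → ∑ i, |w i - w' i| = ∑ i, |u i - v i| →
      (ν {y | ∀ i, y i ≤ w i}).toReal - (ν {y | ∀ i, y i ≤ w' i}).toReal
        ≤ ∑ i, |u i - v i| := by
    intro w w' hmin hsum
    have h1 := copula_measure_le d ν hm w w'
    simp only [hmin] at h1
    rw [hsum] at h1
    have h2 : ν {y | ∀ i, y i ≤ m i} ≤ ν {y | ∀ i, y i ≤ w' i} :=
      measure_mono (fun y hy i => (hy i).trans ((hmin i ▸ inf_le_right)))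
    have h3 : ν {y | ∀ i, y i ≤ w i} ≤ ν {y | ∀ i, y i ≤ w' i}
        + ENNReal.ofReal (∑ i, |u i - v i|) := h1.trans (by gcongr)
    have hfin : ν {y | ∀ i, y i ≤ w' i} ≠ ⊤ := measure_ne_top _ _
    have := ENNReal.toReal_mono (by finiteness) h3
    rw [ENNReal.toReal_add hfin ENNReal.ofReal_ne_top, ENNReal.toReal_ofReal hs] at this
    linarith
  rw [abs_sub_le_iff]
  constructor
  · exact key u v (fun i => rfl) rfl
  · refine key v u (fun i => inf_comm _ _) ?_
    exact Finset.sum_congr rfl fun i _ => abs_sub_comm _ _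

/-- Uniqueness in Sklar's theorem: if all margins of a multivariate CDF `H`
are continuous, then any two copulas giving the Sklar decomposition of `H`
agree on `[0,1]^d`. -/
theorem sklar_uniqueness
    (d : ℕ) (μ : Measure (Fin d → ℝ)) [IsProbabilityMeasure μ]
    (H : (Fin d → ℝ) → ℝ)
    (hH : ∀ x, H x = (μ {y | ∀ i, y i ≤ x i}).toReal)
    (F : Fin d → ℝ → ℝ)
    (hF : ∀ i t, F i t = ((μ.map fun y => y i) (Iic t)).toReal)
    (hFc : ∀ i, Continuous (F i))
    (C C' : (Fin d → ℝ) → ℝ) (hC : IsCopula d C) (hC' : IsCopula d C')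
    (hSk : ∀ x, H x = C fun i => F i (x i))
    (hSk' : ∀ x, H x = C' fun i => F i (x i)) :
    ∀ u : Fin d → ℝ, (∀ i, u i ∈ Icc (0 : ℝ) 1) → C u = C' u := by
  -- basic facts about the margins F i
  have hprob : ∀ i : Fin d, IsProbabilityMeasure (μ.map fun y => y i) := fun i =>
    Measure.isProbabilityMeasure_map (measurable_pi_apply i).aemeasurable
  have hFcdf : ∀ i : Fin d, F i = ProbabilityTheory.cdf (μ.map fun y => y i) := by
    intro i
    funext t
    have := hprob i
    rw [hF i t, ProbabilityTheory.cdf_eq_real, measureReal_def]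
  have hF01 : ∀ i t, F i t ∈ Icc (0 : ℝ) 1 := by
    intro i t
    rw [hFcdf i]
    exact ⟨ProbabilityTheory.cdf_nonneg _ _, ProbabilityTheory.cdf_le_one _ _⟩
  have hFbot : ∀ i : Fin d, Tendsto (F i) atBot (𝓝 0) := fun i =>
    hFcdf i ▸ ProbabilityTheory.tendsto_cdf_atBot _
  have hFtop : ∀ i : Fin d, Tendsto (F i) atTop (𝓝 1) := fun i =>
    hFcdf i ▸ ProbabilityTheory.tendsto_cdf_atTop _
  -- approximation: every value in [0,1] is within ε of the range of F i
  have happrox : ∀ (i : Fin d) (c : ℝ), c ∈ Icc (0 : ℝ) 1 → ∀ ε > (0 : ℝ),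
      ∃ t, |F i t - c| < ε := by
    intro i c hc ε hε
    obtain ⟨a, ha⟩ := ((hFbot i).eventually (eventually_lt_nhds hε)).exists
    obtain ⟨b, hb⟩ := ((hFtop i).eventually (eventually_gt_nhds (by linarith : (1 : ℝ) - ε < 1))).exists
    have hmono : Monotone (F i) := by
      rw [hFcdf i]; exact ProbabilityTheory.monotone_cdf _
    set a' := min a b with ha'
    have ha'2 : F i a' < ε := lt_of_le_of_lt (hmono (min_le_left a b)) ha
    by_cases h1 : c ≤ F i a'
    · exact ⟨a', by rw [abs_of_nonneg (by linarith)]; linarith [hc.1]⟩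
    by_cases h2 : F i b ≤ c
    · exact ⟨b, by rw [abs_of_nonpos (by linarith)]; linarith [hc.2]⟩
    push_neg at h1 h2
    obtain ⟨t, _, ht⟩ := intermediate_value_Icc (min_le_right a b) (hFc i).continuousOn
      ⟨le_of_lt h1, le_of_lt h2⟩
    exact ⟨t, by rw [ht]; simpa using hε⟩
  -- main argument
  intro u hu
  obtain ⟨ν, hνp, hνm, hνC⟩ := hC
  obtain ⟨ν', hν'p, hν'm, hν'C⟩ := hC'
  by_contra hne
  set ε := |C u - C' u| with hεdef
  have hε : 0 < ε := abs_pos.2 (sub_ne_zero.2 hne)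
  set δ := ε / (2 * d + 2) with hδdef
  have hδ : 0 < δ := by positivity
  -- choose approximating points
  choose t ht using fun i => happrox i (u i) (hu i) δ hδ
  set v : Fin d → ℝ := fun i => F i (t i) with hv
  have hv01 : ∀ i, v i ∈ Icc (0 : ℝ) 1 := fun i => hF01 i (t i)
  have hCv : C v = C' v := by
    rw [← hSk t, ← hSk' t]
  have hsum : ∑ i, |u i - v i| ≤ d * δ := by
    calc ∑ i, |u i - v i| ≤ ∑ _i : Fin d, δ :=
          Finset.sum_le_sum fun i _ => le_of_lt (by rw [abs_sub_comm]; exact ht i)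
      _ = d * δ := by simp [mul_comm]
  have h1 : |C u - C v| ≤ ∑ i, |u i - v i| := by
    rw [hνC u hu, hνC v hv01]
    exact copula_lipschitz d ν hνm u v
  have h2 : |C' v - C' u| ≤ ∑ i, |v i - u i| := by
    rw [hν'C u hu, hν'C v hv01]
    exact copula_lipschitz d ν' hν'm v u
  have hsum' : ∑ i, |v i - u i| = ∑ i, |u i - v i| :=
    Finset.sum_congr rfl fun i _ => abs_sub_comm _ _
  have : ε ≤ |C u - C v| + |C v - C' v| + |C' v - C' u| := by
    rw [hεdef]
    calc |C u - C' u| = |(C u - C v) + (C v - C' v) + (C' v - C' u)| := by ring_nf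
      _ ≤ |C u - C v| + |C v - C' v| + |C' v - C' u| := by
          exact (abs_add_le _ _).trans (by gcongr; exact abs_add_le _ _)
  have hmid : |C v - C' v| = 0 := by rw [hCv, sub_self, abs_zero]
  have hfinal : ε ≤ 2 * (d * δ) := by
    rw [hmid] at this
    rw [hsum'] at h2
    linarith
  have h2d : (0:ℝ) < 2 * (d:ℝ) + 2 := by positivity
  have : 2 * ((d:ℝ) * δ) < ε := by
    rw [hδdef, show (2:ℝ) * ((d:ℝ) * (ε / (2 * (d:ℝ) + 2))) = (2 * (d:ℝ) * ε) / (2 * (d:ℝ) + 2) by ring,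
      div_lt_iff₀ h2d]
    nlinarith
  linarith
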